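/- For 0 < p < 1, ∫_0^∞ sin(x)/x^p dx = π / (2·Γ(p)·sin(pπ/2)) and ∫_0^∞ cos(x)/x^p dx = π / (2·Γ(p)·cos(pπ/2)), where the integrals are improper Riemann integrals. -/

import Mathlib

open Real Filter intervalIntegral

open MeasureTheory Set

lemma aux_meas (a : ℝ) : Measurable (fun t : ℝ => t ^ (a - 1) / (1 + t ^ 2)) := by
  fun_prop

lemma aux_int1 {a : ℝ} (h0 : 0 < a) (h2 : a < 2) :
    IntegrableOn (fun t : ℝ => t ^ (a - 1) / (1 + t ^ 2)) (Ioi 0) := by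
  have h01 : IntegrableOn (fun t : ℝ => t ^ (a - 1) / (1 + t ^ 2)) (Ioc 0 1) := by
    have hbase : IntegrableOn (fun t : ℝ => t ^ (a - 1)) (Ioc 0 1) := by
      have := (intervalIntegral.intervalIntegrable_rpow' (a := 0) (b := 1)
        (r := a - 1) (by linarith))
      rwa [intervalIntegrable_iff_integrableOn_Ioc_of_le (by norm_num)] at this
    refine hbase.mono' ((aux_meas a).aestronglyMeasurable.restrict) ?_
    filter_upwards [ae_restrict_mem measurableSet_Ioc] with t ht
    have ht0 : (0:ℝ) < t := ht.1
    rw [Real.norm_eq_abs, abs_of_nonneg (by positivity)]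
    exact div_le_self (by positivity) (by nlinarith [sq_nonneg t])
  have h1i : IntegrableOn (fun t : ℝ => t ^ (a - 1) / (1 + t ^ 2)) (Ioi 1) := by
    have hbase : IntegrableOn (fun t : ℝ => t ^ (a - 3)) (Ioi 1) :=
      integrableOn_Ioi_rpow_of_lt (by linarith) one_pos
    refine hbase.mono' ((aux_meas a).aestronglyMeasurable.restrict) ?_
    filter_upwards [ae_restrict_mem measurableSet_Ioi] with t ht
    rw [mem_Ioi] at ht
    have ht0 : (0:ℝ) < t := by linarith
    rw [Real.norm_eq_abs, abs_of_nonneg (by positivity)]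
    rw [div_le_iff₀ (by positivity)]
    have h3 : t ^ (a - 3) * (1 + t ^ 2) = t ^ (a-3) + t ^ (a - 3) * t ^ 2 := by ring
    have h2' : t ^ (a - 3) * t ^ 2 = t ^ (a - 1) := by
      rw [← Real.rpow_natCast t 2, ← Real.rpow_add ht0]; ring_nf
    rw [h3, h2']
    nlinarith [Real.rpow_pos_of_pos ht0 (a - 3)]
  have hu := h01.union h1i
  rwa [Ioc_union_Ioi_eq_Ioi zero_le_one] at hu

lemma aux_exp_int {c : ℝ} (hc : 0 < c) :
    ∫ s in Ioi (0:ℝ), Real.exp (-(c * s)) = 1 / c := by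
  have := Real.integral_rpow_mul_exp_neg_mul_Ioi (a := 1) (r := c) one_pos hc
  simpa using this

-- ∫_0^∞ t^(a-1)/(1+t²) dt = π / (2 sin (a π / 2)), for 0 < a < 2
lemma aux_main_int {a : ℝ} (h0 : 0 < a) (h2 : a < 2) :
    ∫ t in Ioi (0:ℝ), t ^ (a - 1) / (1 + t ^ 2) = π / (2 * Real.sin (a * π / 2)) := by
  have key : ∫ t in Ioi (0:ℝ), t ^ (a - 1) / (1 + t ^ 2)
      = ∫ t in Ioi (0:ℝ), ∫ s in Ioi (0:ℝ), t ^ (a - 1) * Real.exp (-((1 + t ^ 2) * s)) := by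
    refine setIntegral_congr_fun measurableSet_Ioi (fun t ht => ?_)
    rw [MeasureTheory.integral_const_mul, aux_exp_int (by positivity)]
    rw [mul_one_div]
  rw [key]
  have hint : Integrable (Function.uncurry fun t s : ℝ =>
      t ^ (a - 1) * Real.exp (-((1 + t ^ 2) * s)))
      ((volume.restrict (Ioi 0)).prod (volume.restrict (Ioi 0))) := by
    have hm : AEStronglyMeasurable (Function.uncurry fun t s : ℝ =>
        t ^ (a - 1) * Real.exp (-((1 + t ^ 2) * s)))
        ((volume.restrict (Ioi 0)).prod (volume.restrict (Ioi 0))) := by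
      apply Measurable.aestronglyMeasurable
      fun_prop
    rw [MeasureTheory.integrable_prod_iff hm]
    constructor
    · filter_upwards [ae_restrict_mem measurableSet_Ioi] with t ht
      rw [mem_Ioi] at ht
      simp only [Function.uncurry]
      apply Integrable.const_mul
      have : IntegrableOn (fun s : ℝ => Real.exp (-(1 + t^2) * s)) (Ioi 0) :=
        exp_neg_integrableOn_Ioi 0 (by positivity)
      refine this.congr_fun (fun s _ => ?_) measurableSet_Ioi
      ring_nf
    · have hcong : ∀ᵐ t ∂(volume.restrict (Ioi (0:ℝ))),
          (∫ s in Ioi (0:ℝ), ‖t ^ (a - 1) * Real.exp (-((1 + t ^ 2) * s))‖)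
            = t ^ (a - 1) / (1 + t ^ 2) := by
        filter_upwards [ae_restrict_mem measurableSet_Ioi] with t ht
        rw [mem_Ioi] at ht
        have : ∀ s, ‖t ^ (a - 1) * Real.exp (-((1 + t ^ 2) * s))‖
            = t ^ (a - 1) * Real.exp (-((1 + t ^ 2) * s)) := by
          intro s
          rw [Real.norm_eq_abs, abs_of_nonneg (by positivity)]
        simp_rw [this]
        rw [MeasureTheory.integral_const_mul, aux_exp_int (by positivity), mul_one_div]
      refine (aux_int1 h0 h2).congr ?_
      filter_upwards [hcong] with t h1
      simp only [Function.uncurry]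
      exact h1.symm
  rw [MeasureTheory.integral_integral_swap hint]
  have inner : ∀ s ∈ Ioi (0:ℝ),
      ∫ t in Ioi (0:ℝ), t ^ (a - 1) * Real.exp (-((1 + t ^ 2) * s))
        = Real.exp (-s) * s ^ (-(a/2)) * ((1/2) * Real.Gamma (a/2)) := by
    intro s hs
    rw [mem_Ioi] at hs
    have e1 : ∀ t ∈ Ioi (0:ℝ), t ^ (a - 1) * Real.exp (-((1 + t ^ 2) * s))
        = Real.exp (-s) * (t ^ (a - 1) * Real.exp (-s * t ^ ((2:ℕ):ℝ))) := by
      intro t ht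
      rw [mem_Ioi] at ht
      rw [Real.rpow_natCast, show -((1+t^2)*s) = -s + -(s * t^2) by ring, Real.exp_add]
      ring
    rw [setIntegral_congr_fun measurableSet_Ioi e1, MeasureTheory.integral_const_mul,
      integral_rpow_mul_exp_neg_mul_rpow (by norm_num) (by linarith) hs]
    push_cast
    rw [show -(a - 1 + 1) / 2 = -(a/2) by ring, show (a - 1 + 1) / 2 = a/2 by ring]
    ring
  rw [setIntegral_congr_fun measurableSet_Ioi inner, MeasureTheory.integral_mul_const]
  have e2 : ∀ s ∈ Ioi (0:ℝ), Real.exp (-s) * s ^ (-(a/2))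
      = Real.exp (-s) * s ^ (1 - a/2 - 1) := by
    intro s _; norm_num
  rw [setIntegral_congr_fun measurableSet_Ioi e2, ← Real.Gamma_eq_integral (by linarith)]
  have hrefl := Real.Gamma_mul_Gamma_one_sub (a/2)
  have : Real.Gamma (1 - a/2) * ((1:ℝ)/2 * Real.Gamma (a/2))
      = 1/2 * (π / Real.sin (π * (a/2))) := by
    rw [← hrefl]; ring
  rw [this, show π * (a/2) = a * π / 2 by ring]
  ring

lemma aux_fubini {p : ℝ} (hp0 : 0 < p) (hp1 : p < 1) {g : ℝ → ℝ} (hg : Continuous g)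
    (hg1 : ∀ x, |g x| ≤ 1) {T : ℝ} (hT : 0 < T) :
    ∫ x in Ioc 0 T, g x / x ^ p
      = (1 / Real.Gamma p) * ∫ t in Ioi (0:ℝ),
          t ^ (p - 1) * ∫ x in Ioc 0 T, Real.exp (-(t * x)) * g x := by
  have hG : (0:ℝ) < Real.Gamma p := Real.Gamma_pos_of_pos hp0
  have step1 : ∫ x in Ioc 0 T, g x / x ^ p
      = (1 / Real.Gamma p) * ∫ x in Ioc 0 T,
          (∫ t in Ioi (0:ℝ), g x * (t ^ (p - 1) * Real.exp (-(x * t)))) := by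
    rw [← MeasureTheory.integral_const_mul]
    refine setIntegral_congr_fun measurableSet_Ioc (fun x hx => ?_)
    have hx0 : 0 < x := hx.1
    rw [MeasureTheory.integral_const_mul, Real.integral_rpow_mul_exp_neg_mul_Ioi hp0 hx0]
    rw [one_div x, Real.inv_rpow hx0.le]
    rw [div_eq_mul_inv]
    field_simp
  rw [step1]
  congr 1
  have hint : Integrable (Function.uncurry fun x t : ℝ =>
      g x * (t ^ (p - 1) * Real.exp (-(x * t))))
      ((volume.restrict (Ioc 0 T)).prod (volume.restrict (Ioi 0))) := by
    have hm : AEStronglyMeasurable (Function.uncurry fun x t : ℝ =>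
        g x * (t ^ (p - 1) * Real.exp (-(x * t))))
        ((volume.restrict (Ioc 0 T)).prod (volume.restrict (Ioi 0))) := by
      apply Measurable.aestronglyMeasurable
      fun_prop
    rw [MeasureTheory.integrable_prod_iff hm]
    constructor
    · filter_upwards [ae_restrict_mem measurableSet_Ioc] with x hx
      simp only [Function.uncurry]
      apply Integrable.const_mul
      have hbase : IntegrableOn (fun t : ℝ => t ^ (p-1) * Real.exp (-x * t ^ (1:ℝ))) (Ioi 0) :=
        integrableOn_rpow_mul_exp_neg_mul_rpow (by linarith) zero_lt_one hx.1
      refine hbase.congr_fun (fun t _ => ?_) measurableSet_Ioi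
      beta_reduce; rw [Real.rpow_one]; ring_nf
    · have hbnd : IntegrableOn (fun x : ℝ => Real.Gamma p * x ^ (-p)) (Ioc 0 T) := by
        have := (intervalIntegral.intervalIntegrable_rpow' (a := 0) (b := T)
          (r := -p) (by linarith))
        rw [intervalIntegrable_iff_integrableOn_Ioc_of_le hT.le] at this
        exact this.const_mul _
      refine hbnd.mono' ?_ ?_
      · exact hm.norm.integral_prod_right'
      · filter_upwards [ae_restrict_mem measurableSet_Ioc] with x hx
        have hx0 : 0 < x := hx.1
        simp only [Function.uncurry]
        have hval : ∫ t in Ioi (0:ℝ), ‖g x * (t ^ (p - 1) * Real.exp (-(x * t)))‖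
            = |g x| * ((1/x) ^ p * Real.Gamma p) := by
          have : ∀ t ∈ Ioi (0:ℝ), ‖g x * (t ^ (p - 1) * Real.exp (-(x * t)))‖
              = |g x| * (t ^ (p-1) * Real.exp (-(x * t))) := by
            intro t ht
            rw [mem_Ioi] at ht
            rw [Real.norm_eq_abs, abs_mul,
              abs_of_nonneg (show (0:ℝ) ≤ t ^ (p-1) * Real.exp (-(x*t)) by positivity)]
          rw [setIntegral_congr_fun measurableSet_Ioi this, MeasureTheory.integral_const_mul,
            Real.integral_rpow_mul_exp_neg_mul_Ioi hp0 hx0]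
        rw [hval, Real.norm_eq_abs, abs_of_nonneg (by positivity)]
        have h1x : (1/x) ^ p = x ^ (-p) := by
          rw [one_div, Real.inv_rpow hx0.le, ← Real.rpow_neg hx0.le]
        rw [h1x]
        have h2 : |g x| * (x ^ (-p) * Real.Gamma p) ≤ 1 * (x ^ (-p) * Real.Gamma p) :=
          mul_le_mul_of_nonneg_right (hg1 x) (by positivity)
        rw [mul_comm (Real.Gamma p)]
        linarith
  rw [MeasureTheory.integral_integral_swap hint]
  refine setIntegral_congr_fun measurableSet_Ioi (fun t ht => ?_)
  rw [← MeasureTheory.integral_const_mul]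
  refine setIntegral_congr_fun measurableSet_Ioc (fun x hx => ?_)
  rw [show x * t = t * x by ring]; ring

lemma aux_deriv_sin (t : ℝ) (T : ℝ) :
    ∫ x in (0:ℝ)..T, Real.exp (-(t*x)) * Real.sin x
      = (1 - Real.exp (-(t*T)) * (t * Real.sin T + Real.cos T)) / (1 + t^2) := by
  have hc : (1 + t^2 : ℝ) ≠ 0 := by positivity
  have hF : ∀ x : ℝ, HasDerivAt
      (fun x : ℝ => -(Real.exp (-(t*x)) * (t * Real.sin x + Real.cos x)) / (1 + t^2))
      (Real.exp (-(t*x)) * Real.sin x) x := by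
    intro x
    have h1 : HasDerivAt (fun x : ℝ => -(t*x)) (-t) x := by
      simpa using ((hasDerivAt_id x).const_mul t).fun_neg
    have h2 := h1.exp
    have h3 : HasDerivAt (fun x : ℝ => t * Real.sin x + Real.cos x)
        (t * Real.cos x - Real.sin x) x := by
      simpa [sub_eq_add_neg] using ((Real.hasDerivAt_sin x).const_mul t).fun_add
        (Real.hasDerivAt_cos x)
    have h4 := ((h2.fun_mul h3).fun_neg).div_const (1 + t^2)
    refine h4.congr_deriv ?_
    field_simp
    ring
  rw [intervalIntegral.integral_eq_sub_of_hasDerivAt (fun x _ => hF x)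
    (by apply Continuous.intervalIntegrable; fun_prop)]
  simp [Real.sin_zero, Real.cos_zero]
  ring

lemma aux_deriv_cos (t : ℝ) (T : ℝ) :
    ∫ x in (0:ℝ)..T, Real.exp (-(t*x)) * Real.cos x
      = (t + Real.exp (-(t*T)) * (Real.sin T - t * Real.cos T)) / (1 + t^2) := by
  have hc : (1 + t^2 : ℝ) ≠ 0 := by positivity
  have hF : ∀ x : ℝ, HasDerivAt
      (fun x : ℝ => Real.exp (-(t*x)) * (Real.sin x - t * Real.cos x) / (1 + t^2))
      (Real.exp (-(t*x)) * Real.cos x) x := by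
    intro x
    have h1 : HasDerivAt (fun x : ℝ => -(t*x)) (-t) x := by
      simpa using ((hasDerivAt_id x).const_mul t).fun_neg
    have h2 := h1.exp
    have h3 : HasDerivAt (fun x : ℝ => Real.sin x - t * Real.cos x)
        (Real.cos x + t * Real.sin x) x := by
      have := (Real.hasDerivAt_sin x).fun_sub ((Real.hasDerivAt_cos x).const_mul t)
      simpa [sub_neg_eq_add] using this
    have h4 := (h2.fun_mul h3).div_const (1 + t^2)
    refine h4.congr_deriv ?_
    field_simp
    ring
  rw [intervalIntegral.integral_eq_sub_of_hasDerivAt (fun x _ => hF x)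
    (by apply Continuous.intervalIntegrable; fun_prop)]
  simp [Real.sin_zero, Real.cos_zero]
  ring

lemma aux_bnd_int {p : ℝ} (hp0 : 0 < p) {T : ℝ} (hT : 0 < T) :
    IntegrableOn (fun t : ℝ => t ^ (p-1) * Real.exp (-(T*t)) + t ^ p * Real.exp (-(T*t)))
      (Ioi 0) := by
  have h1 : IntegrableOn (fun t : ℝ => t ^ (p-1) * Real.exp (-T * t ^ (1:ℝ))) (Ioi 0) :=
    integrableOn_rpow_mul_exp_neg_mul_rpow (by linarith) zero_lt_one hT
  have h2 : IntegrableOn (fun t : ℝ => t ^ p * Real.exp (-T * t ^ (1:ℝ))) (Ioi 0) :=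
    integrableOn_rpow_mul_exp_neg_mul_rpow (by linarith) zero_lt_one hT
  have h3 : IntegrableOn (fun t : ℝ => t ^ (p-1) * Real.exp (-T * t ^ (1:ℝ))
      + t ^ p * Real.exp (-T * t ^ (1:ℝ))) (Ioi 0) := h1.add h2
  refine h3.congr_fun (fun t _ => ?_) measurableSet_Ioi
  beta_reduce; rw [Real.rpow_one]; ring_nf

lemma aux_bnd_val {p : ℝ} (hp0 : 0 < p) {T : ℝ} (hT : 0 < T) :
    ∫ t in Ioi (0:ℝ), (t ^ (p-1) * Real.exp (-(T*t)) + t ^ p * Real.exp (-(T*t)))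
      = (1/T) ^ p * Real.Gamma p + (1/T) ^ (p+1) * Real.Gamma (p+1) := by
  have h1 : IntegrableOn (fun t : ℝ => t ^ (p-1) * Real.exp (-(T*t))) (Ioi 0) := by
    have := integrableOn_rpow_mul_exp_neg_mul_rpow (p := 1) (s := p - 1) (b := T)
      (by linarith) zero_lt_one hT
    refine this.congr_fun (fun t _ => ?_) measurableSet_Ioi
    beta_reduce; rw [Real.rpow_one]; ring_nf
  have h2 : IntegrableOn (fun t : ℝ => t ^ p * Real.exp (-(T*t))) (Ioi 0) := by
    have := integrableOn_rpow_mul_exp_neg_mul_rpow (p := 1) (s := p) (b := T)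
      (by linarith) zero_lt_one hT
    refine this.congr_fun (fun t _ => ?_) measurableSet_Ioi
    beta_reduce; rw [Real.rpow_one]; ring_nf
  rw [MeasureTheory.integral_add h1 h2,
    Real.integral_rpow_mul_exp_neg_mul_Ioi hp0 hT]
  congr 1
  have := Real.integral_rpow_mul_exp_neg_mul_Ioi (a := p + 1) (r := T) (by linarith) hT
  rw [show p + 1 - 1 = p by ring] at this
  rw [this]

lemma aux_tail_int {p : ℝ} (hp0 : 0 < p) {T : ℝ} (hT : 0 < T) {h : ℝ → ℝ}
    (hh : Continuous h) (hhb : ∀ t, 0 < t → |h t| ≤ 1 + t) :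
    IntegrableOn (fun t : ℝ => t ^ (p-1) * (Real.exp (-(t*T)) * h t / (1 + t^2)))
      (Ioi 0) := by
  refine (aux_bnd_int hp0 hT).mono' (by apply Measurable.aestronglyMeasurable; fun_prop) ?_
  filter_upwards [ae_restrict_mem measurableSet_Ioi] with t ht
  rw [mem_Ioi] at ht
  rw [Real.norm_eq_abs, abs_mul, abs_of_nonneg (Real.rpow_nonneg ht.le _), abs_div, abs_mul,
    abs_of_nonneg (Real.exp_nonneg _), abs_of_nonneg (by positivity : (0:ℝ) ≤ 1 + t^2)]
  have hb := hhb t ht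
  have key : Real.exp (-(t*T)) * |h t| / (1 + t^2) ≤ Real.exp (-(T*t)) * (1 + t) := by
    rw [div_le_iff₀ (by positivity), mul_comm t T]
    nlinarith [mul_le_mul_of_nonneg_left hb (Real.exp_pos (-(T*t))).le,
      mul_nonneg (mul_nonneg (Real.exp_pos (-(T*t))).le
        (by positivity : (0:ℝ) ≤ 1 + t)) (sq_nonneg t)]
  calc t ^ (p-1) * (Real.exp (-(t*T)) * |h t| / (1 + t^2))
      ≤ t ^ (p-1) * (Real.exp (-(T*t)) * (1 + t)) :=
        mul_le_mul_of_nonneg_left key (Real.rpow_nonneg ht.le _)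
    _ = t ^ (p-1) * Real.exp (-(T*t)) + t ^ (p-1) * t * Real.exp (-(T*t)) := by ring
    _ = t ^ (p-1) * Real.exp (-(T*t)) + t ^ p * Real.exp (-(T*t)) := by
        rw [show t ^ (p-1) * t = t ^ p by
          rw [← Real.rpow_add_one ht.ne' (p-1)]; ring_nf]
    _ ≤ _ := le_refl _

lemma aux_tail {p : ℝ} (hp0 : 0 < p) {T : ℝ} (hT : 0 < T) {h : ℝ → ℝ}
    (hh : Continuous h) (hhb : ∀ t, 0 < t → |h t| ≤ 1 + t) :
    ‖∫ t in Ioi (0:ℝ), t ^ (p-1) * (Real.exp (-(t*T)) * h t / (1 + t^2))‖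
      ≤ (1/T) ^ p * Real.Gamma p + (1/T) ^ (p+1) * Real.Gamma (p+1) := by
  rw [← aux_bnd_val hp0 hT]
  refine MeasureTheory.norm_integral_le_of_norm_le (aux_bnd_int hp0 hT) ?_
  filter_upwards [ae_restrict_mem measurableSet_Ioi] with t ht
  rw [mem_Ioi] at ht
  rw [Real.norm_eq_abs, abs_mul, abs_of_nonneg (Real.rpow_nonneg ht.le _), abs_div, abs_mul,
    abs_of_nonneg (Real.exp_nonneg _), abs_of_nonneg (by positivity : (0:ℝ) ≤ 1 + t^2)]
  have hb := hhb t ht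
  have key : Real.exp (-(t*T)) * |h t| / (1 + t^2) ≤ Real.exp (-(T*t)) * (1 + t) := by
    rw [div_le_iff₀ (by positivity), mul_comm t T]
    nlinarith [mul_le_mul_of_nonneg_left hb (Real.exp_pos (-(T*t))).le,
      mul_nonneg (mul_nonneg (Real.exp_pos (-(T*t))).le
        (by positivity : (0:ℝ) ≤ 1 + t)) (sq_nonneg t)]
  calc t ^ (p-1) * (Real.exp (-(t*T)) * |h t| / (1 + t^2))
      ≤ t ^ (p-1) * (Real.exp (-(T*t)) * (1 + t)) :=
        mul_le_mul_of_nonneg_left key (Real.rpow_nonneg ht.le _)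
    _ = t ^ (p-1) * Real.exp (-(T*t)) + t ^ (p-1) * t * Real.exp (-(T*t)) := by ring
    _ = t ^ (p-1) * Real.exp (-(T*t)) + t ^ p * Real.exp (-(T*t)) := by
        rw [show t ^ (p-1) * t = t ^ p by
          rw [← Real.rpow_add_one ht.ne' (p-1)]; ring_nf]

lemma aux_final {p : ℝ} (hp0 : 0 < p) (hp1 : p < 1) {g : ℝ → ℝ} (hg : Continuous g)
    (hg1 : ∀ x, |g x| ≤ 1) {h : ℝ → ℝ → ℝ} (hh : ∀ T, Continuous (h T))
    (hhb : ∀ T t, 0 < t → |h T t| ≤ 1 + t) {A : ℝ → ℝ} {L : ℝ}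
    (hiden : ∀ T : ℝ, 0 < T → ∀ t : ℝ, 0 < t →
      (∫ x in (0:ℝ)..T, Real.exp (-(t*x)) * g x)
        = A t / (1 + t^2) + Real.exp (-(t*T)) * h T t / (1 + t^2))
    (hAint : IntegrableOn (fun t : ℝ => t ^ (p-1) * (A t / (1 + t^2))) (Ioi 0))
    (hA : ∫ t in Ioi (0:ℝ), t ^ (p-1) * (A t / (1 + t^2)) = L) :
    Tendsto (fun T : ℝ => ∫ x in (0:ℝ)..T, g x / x ^ p) atTop
      (nhds ((1 / Real.Gamma p) * L)) := by
  set R : ℝ → ℝ := fun T =>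
    ∫ t in Ioi (0:ℝ), t ^ (p-1) * (Real.exp (-(t*T)) * h T t / (1 + t^2)) with hR
  have hEq : (fun T : ℝ => ∫ x in (0:ℝ)..T, g x / x ^ p)
      =ᶠ[atTop] fun T => (1 / Real.Gamma p) * (L + R T) := by
    filter_upwards [eventually_gt_atTop 0] with T hT
    rw [intervalIntegral.integral_of_le hT.le, aux_fubini hp0 hp1 hg hg1 hT]
    congr 1
    have hinner : ∀ t ∈ Ioi (0:ℝ),
        t ^ (p-1) * ∫ x in Ioc 0 T, Real.exp (-(t*x)) * g x
          = t ^ (p-1) * (A t / (1 + t^2)) +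
            t ^ (p-1) * (Real.exp (-(t*T)) * h T t / (1 + t^2)) := by
      intro t ht
      rw [mem_Ioi] at ht
      rw [← intervalIntegral.integral_of_le hT.le, hiden T hT t ht]
      ring
    rw [setIntegral_congr_fun measurableSet_Ioi hinner,
      MeasureTheory.integral_add hAint (aux_tail_int hp0 hT (hh T) (hhb T)), hA]
  have hB : Tendsto (fun T : ℝ =>
      (1/T) ^ p * Real.Gamma p + (1/T) ^ (p+1) * Real.Gamma (p+1)) atTop (nhds 0) := by
    have t1 : Tendsto (fun T : ℝ => T ^ (-p) * Real.Gamma p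
        + T ^ (-(p+1)) * Real.Gamma (p+1)) atTop (nhds 0) := by
      have := ((tendsto_rpow_neg_atTop hp0).mul_const (Real.Gamma p)).add
        ((tendsto_rpow_neg_atTop (by linarith : (0:ℝ) < p + 1)).mul_const (Real.Gamma (p+1)))
      simpa using this
    refine t1.congr' ?_
    filter_upwards [eventually_gt_atTop 0] with T hT
    rw [one_div, Real.inv_rpow hT.le, Real.inv_rpow hT.le, ← Real.rpow_neg hT.le,
      ← Real.rpow_neg hT.le]
  have hR0 : Tendsto R atTop (nhds 0) := by
    apply squeeze_zero_norm' ?_ hB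
    filter_upwards [eventually_gt_atTop 0] with T hT
    exact aux_tail hp0 hT (hh T) (hhb T)
  have hlim : Tendsto (fun T => (1 / Real.Gamma p) * (L + R T)) atTop
      (nhds ((1 / Real.Gamma p) * L)) := by
    have h1 : Tendsto (fun T => L + R T) atTop (nhds (L + 0)) :=
      (tendsto_const_nhds (x := L)).add hR0
    rw [add_zero] at h1
    exact h1.const_mul (1 / Real.Gamma p)
  exact hlim.congr' hEq.symm
/-- For `0 < p < 1`, `∫_0^∞ sin x / x^p dx = π/(2 Γ(p) sin(pπ/2))` and
`∫_0^∞ cos x / x^p dx = π/(2 Γ(p) cos(pπ/2))`, as improper (limit of `∫_0^T`) integrals. -/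
theorem stmt_16 (p : ℝ) (hp0 : 0 < p) (hp1 : p < 1) :
    Tendsto (fun T : ℝ => ∫ x in (0 : ℝ)..T, Real.sin x / x ^ p) atTop
      (nhds (π / (2 * Real.Gamma p * Real.sin (p * π / 2)))) ∧
    Tendsto (fun T : ℝ => ∫ x in (0 : ℝ)..T, Real.cos x / x ^ p) atTop
      (nhds (π / (2 * Real.Gamma p * Real.cos (p * π / 2)))) := by
  have hG : (0:ℝ) < Real.Gamma p := Real.Gamma_pos_of_pos hp0
  have hπ := Real.pi_pos
  have hsin : 0 < Real.sin (p * π / 2) :=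
    Real.sin_pos_of_pos_of_lt_pi (by positivity) (by nlinarith)
  have hcos : 0 < Real.cos (p * π / 2) :=
    Real.cos_pos_of_mem_Ioo ⟨by nlinarith, by nlinarith⟩
  constructor
  · have := aux_final hp0 hp1 Real.continuous_sin (fun x => Real.abs_sin_le_one x)
      (h := fun T t => -(t * Real.sin T + Real.cos T))
      (fun T => by fun_prop)
      (fun T t ht => by
        rw [abs_neg]
        calc |t * Real.sin T + Real.cos T| ≤ |t * Real.sin T| + |Real.cos T| := abs_add_le _ _
          _ ≤ t * 1 + 1 := by
              rw [abs_mul, abs_of_nonneg ht.le]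
              exact add_le_add (mul_le_mul_of_nonneg_left (Real.abs_sin_le_one T) ht.le)
                (Real.abs_cos_le_one T)
          _ = 1 + t := by ring)
      (A := fun _ => (1:ℝ))
      (fun T hT t ht => by rw [aux_deriv_sin t T]; field_simp; ring)
      ((aux_int1 hp0 (by linarith)).congr_fun
        (fun t _ => by rw [mul_one_div]) measurableSet_Ioi)
      (by
        have : ∀ t ∈ Ioi (0:ℝ), t ^ (p-1) * ((1:ℝ) / (1 + t^2)) = t ^ (p-1) / (1 + t^2) :=
          fun t _ => mul_one_div _ _
        rw [setIntegral_congr_fun measurableSet_Ioi this, aux_main_int hp0 (by linarith)])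
    convert this using 2
    rw [div_mul_div_comm, one_mul]
    congr 1
    ring
  · have := aux_final hp0 hp1 Real.continuous_cos (fun x => Real.abs_cos_le_one x)
      (h := fun T t => Real.sin T - t * Real.cos T)
      (fun T => by fun_prop)
      (fun T t ht => by
        calc |Real.sin T - t * Real.cos T| ≤ |Real.sin T| + |t * Real.cos T| := abs_sub _ _
          _ ≤ 1 + t * 1 := by
              rw [abs_mul, abs_of_nonneg ht.le]
              exact add_le_add (Real.abs_sin_le_one T)
                (mul_le_mul_of_nonneg_left (Real.abs_cos_le_one T) ht.le)
          _ = 1 + t := by ring)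
      (A := fun t => t)
      (fun T hT t ht => by rw [aux_deriv_cos t T, add_div])
      ((aux_int1 (by linarith : (0:ℝ) < p + 1) (by linarith)).congr_fun
        (fun t ht => by
          have ht0 : (0:ℝ) < t := ht
          beta_reduce
          rw [show p + 1 - 1 = p by ring,
            show t ^ p = t ^ (p-1) * t by rw [← Real.rpow_add_one ht0.ne' (p-1)]; ring_nf]
          ring) measurableSet_Ioi)
      (by
        have hco : ∀ t ∈ Ioi (0:ℝ), t ^ (p-1) * (t / (1 + t^2))
            = t ^ (p+1-1) / (1 + t^2) := by
          intro t ht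
          have ht0 : (0:ℝ) < t := ht
          rw [show p + 1 - 1 = p by ring,
            show t ^ p = t ^ (p-1) * t by rw [← Real.rpow_add_one ht0.ne' (p-1)]; ring_nf]
          ring
        rw [setIntegral_congr_fun measurableSet_Ioi hco,
          aux_main_int (by linarith : (0:ℝ) < p + 1) (by linarith),
          show (p+1) * π / 2 = p * π / 2 + π / 2 by ring, Real.sin_add_pi_div_two])
    convert this using 2
    rw [div_mul_div_comm, one_mul]
    congr 1
    ring
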